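/- For every odd natural number N and real x with 0 ≤ x < 1/2, the upper half binomial sum is strictly decreasing when N increases by 2: ∑_{j=⌈(N+2)/2⌉}^{N+2} C(N+2,j) x^j (1-x)^{N+2-j} < ∑_{j=⌈N/2⌉}^{N} C(N,j) x^j (1-x)^{N-j}, provided 0 < x < 1/2 (with equality of both sides to 0 when x = 0). -/

import Mathlib

open Finset

private lemma reindex_succ (f : ℕ → ℝ) (a b : ℕ) :
    ∑ j ∈ Icc (a+1) (b+1), f j = ∑ i ∈ Icc a b, f (i+1) := by
  rw [← image_add_right_Icc a b 1]
  exact Finset.sum_image (by intro u _ v _ h; exact Nat.add_right_cancel h)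

private lemma pascal_step (x : ℝ) (N a : ℕ) (ha : a ≤ N) :
    ∑ j ∈ Icc (a+1) (N+1), ((N+1).choose j : ℝ) * x ^ j * (1-x) ^ (N+1-j)
      = (1-x) * ∑ j ∈ Icc (a+1) N, (N.choose j : ℝ) * x ^ j * (1-x) ^ (N-j)
        + x * ∑ j ∈ Icc a N, (N.choose j : ℝ) * x ^ j * (1-x) ^ (N-j) := by
  rw [reindex_succ]
  have h1 : ∀ i ∈ Icc a N, ((N+1).choose (i+1) : ℝ) * x ^ (i+1) * (1-x) ^ (N+1-(i+1))
      = (N.choose (i+1) : ℝ) * x ^ (i+1) * (1-x) ^ (N+1-(i+1))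
        + x * ((N.choose i : ℝ) * x ^ i * (1-x) ^ (N-i)) := by
    intro i hi
    have hc : (N+1).choose (i+1) = N.choose i + N.choose (i+1) := Nat.choose_succ_succ N i
    have he : N+1-(i+1) = N-i := by omega
    rw [hc, he]
    push_cast
    ring
  rw [Finset.sum_congr rfl h1, Finset.sum_add_distrib, ← Finset.mul_sum]
  congr 1
  rw [← reindex_succ (fun j => (N.choose j : ℝ) * x ^ j * (1-x) ^ (N+1-j)) a N,
    Finset.sum_Icc_succ_top (by omega : a+1 ≤ N+1)]
  simp only [Nat.choose_succ_self, Nat.cast_zero, zero_mul, add_zero]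
  rw [Finset.mul_sum]
  refine Finset.sum_congr rfl fun j hj => ?_
  have hj' : j ≤ N := (Finset.mem_Icc.mp hj).2
  have : N+1-j = (N-j)+1 := by omega
  rw [this, pow_succ]
  ring

private lemma peel_bot (x : ℝ) (N a : ℕ) (ha : a ≤ N) :
    ∑ j ∈ Icc a N, (N.choose j : ℝ) * x ^ j * (1-x) ^ (N-j)
      = (N.choose a : ℝ) * x ^ a * (1-x) ^ (N-a)
        + ∑ j ∈ Icc (a+1) N, (N.choose j : ℝ) * x ^ j * (1-x) ^ (N-j) := by
  rw [← Finset.insert_Icc_add_one_left_eq_Icc ha, Finset.sum_insert (by simp)]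

private lemma main_aux (k : ℕ) (x : ℝ) (hx0 : 0 < x) (hx : x < 1/2) :
    ∑ j ∈ Icc (k+2) (2*k+3), ((2*k+3).choose j : ℝ) * x^j * (1-x)^(2*k+3-j)
      < ∑ j ∈ Icc (k+1) (2*k+1), ((2*k+1).choose j : ℝ) * x^j * (1-x)^(2*k+1-j) := by
  have e1 := pascal_step x (2*k+2) (k+1) (by omega)
  have e2 := pascal_step x (2*k+1) (k+1) (by omega)
  have e3 := pascal_step x (2*k+1) k (by omega)
  have p1 := peel_bot x (2*k+1) (k+1) (by omega)
  have p2 := peel_bot x (2*k+1) k (by omega)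
  have hsymm : (2*k+1).choose k = (2*k+1).choose (k+1) := by
    rw [← Nat.choose_symm (by omega : k+1 ≤ 2*k+1)]
    congr 1
    omega
  set A := ∑ j ∈ Icc (k+1) (2*k+1), ((2*k+1).choose j : ℝ) * x^j * (1-x)^(2*k+1-j) with hA
  set B := ∑ j ∈ Icc (k+2) (2*k+1), ((2*k+1).choose j : ℝ) * x^j * (1-x)^(2*k+1-j) with hB
  set D := ∑ j ∈ Icc k (2*k+1), ((2*k+1).choose j : ℝ) * x^j * (1-x)^(2*k+1-j) with hD
  set c := ((2*k+1).choose (k+1) : ℝ) with hc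
  have ha1 : 2*k+1-(k+1) = k := by omega
  have ha2 : 2*k+1-k = k+1 := by omega
  rw [ha1] at p1
  rw [ha2] at p2
  rw [hsymm] at p2
  -- now combine
  rw [e1, e2, e3]
  have hxpos : (0:ℝ) < 1 - x := by linarith
  have hcpos : (0:ℝ) < c := by
    rw [hc]
    exact_mod_cast Nat.choose_pos (by omega)
  have hfact : (0:ℝ) < c * x^(k+1) * (1-x)^(k+1) :=
    mul_pos (mul_pos hcpos (pow_pos hx0 _)) (pow_pos hxpos _)
  have hBval : B = A - c * x^(k+1) * (1-x)^k := by rw [p1]; ring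
  have hDval : D = c * x^k * (1-x)^(k+1) + A := by rw [p2, hc]
  rw [hBval, hDval]
  have key : (1-x)*((1-x)*(A - c*x^(k+1)*(1-x)^k) + x*A)
      + x*((1-x)*A + x*(c*x^k*(1-x)^(k+1) + A))
      = A + (c*x^k*(1-x)^k)*(x*(1-x)*(2*x-1)) := by ring
  rw [key]
  have hP : (0:ℝ) < c*x^k*(1-x)^k :=
    mul_pos (mul_pos hcpos (pow_pos hx0 k)) (pow_pos hxpos k)
  have hneg : x*(1-x)*(2*x-1) < 0 :=
    mul_neg_of_pos_of_neg (mul_pos hx0 hxpos) (by linarith)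
  nlinarith [mul_neg_of_pos_of_neg hP hneg]

theorem upper_half_binomial_strict_anti (N : ℕ) (hN : Odd N) (x : ℝ) (hx0 : 0 < x)
    (hx : x < 1 / 2) :
    ∑ j ∈ Finset.Icc ((N + 3) / 2) (N + 2),
        ((N + 2).choose j : ℝ) * x ^ j * (1 - x) ^ (N + 2 - j)
      < ∑ j ∈ Finset.Icc ((N + 1) / 2) N, (N.choose j : ℝ) * x ^ j * (1 - x) ^ (N - j) := by
  obtain ⟨k, rfl⟩ := hN
  have h1 : (2*k+1+3)/2 = k+2 := by omega
  have h2 : (2*k+1+1)/2 = k+1 := by omega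
  have h3 : 2*k+1+2 = 2*k+3 := by omega
  rw [h1, h2, h3]
  exact main_aux k x hx0 hx
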